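/- arXiv:1705.02181 — 2 statements merged into one kernel-verified Lean document; each statement's English description precedes it below -/
import Mathlib

section
/- Under the hypotheses of the previous spectral approximation lemma, for any r* > r there exists u* ∈ H with ‖u*‖ = 1, belonging to the closed span of all eigenvectors of A associated with eigenvalues in the interval [η − r*, η + r*], such that ‖u − u*‖ ≤ 2r/r*. -/
open RealInnerProductSpace

set_option linter.unusedSectionVars false
set_option linter.unusedVariables false
set_option linter.deprecated false
set_option linter.unnecessarySimpa false

section auxiliary
variable {H : Type*} [NormedAddCommGroup H] [InnerProductSpace ℝ H] [CompleteSpace H]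

lemma keyL0 (A : H →L[ℝ] H) (hcomp : IsCompactOperator A)
    (V : Submodule ℝ H) (hVc : IsClosed (V : Set H))
    {lam : ℝ} (hlam : 0 < lam)
    (hbound : ∀ x ∈ V, ‖A x‖ ≤ lam * ‖x‖)
    (hseq : ∀ ε > 0, ∃ x ∈ V, ‖x‖ = 1 ∧ lam - ε < ⟪A x, x⟫) :
    ∃ x ∈ V, x ≠ 0 ∧ A x = lam • x := by
  have hx : ∀ n : ℕ, ∃ x, x ∈ V ∧ ‖x‖ = 1 ∧ lam - 1/(n+1) < ⟪A x, x⟫ := by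
    intro n
    obtain ⟨x, hxV, hx1, hx2⟩ := hseq (1/(n+1)) (by positivity)
    exact ⟨x, hxV, hx1, hx2⟩
  choose x hxV hx1 hx2 using hx
  -- upper bound on inner
  have hup : ∀ n, ⟪A (x n), x n⟫ ≤ lam := by
    intro n
    calc ⟪A (x n), x n⟫ ≤ ‖A (x n)‖ * ‖x n‖ := real_inner_le_norm _ _
    _ ≤ (lam * ‖x n‖) * ‖x n‖ := by
        gcongr; exact hbound _ (hxV n)
    _ = lam := by rw [hx1 n]; ring
  have htend : Filter.Tendsto (fun n => ⟪A (x n), x n⟫) Filter.atTop (nhds lam) := by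
    have h1 : Filter.Tendsto (fun n : ℕ => lam - 1/(n+1)) Filter.atTop (nhds lam) := by
      have := tendsto_one_div_add_atTop_nhds_zero_nat (𝕜 := ℝ)
      have := (tendsto_const_nhds (x := lam) (f := Filter.atTop (α := ℕ))).sub this
      simpa using this
    exact tendsto_of_tendsto_of_tendsto_of_le_of_le h1 tendsto_const_nhds
      (fun n => (hx2 n).le) hup
  have hdiff : Filter.Tendsto (fun n => A (x n) - lam • x n) Filter.atTop (nhds 0) := by
    rw [tendsto_zero_iff_norm_tendsto_zero]
    have hsq : ∀ n, ‖A (x n) - lam • x n‖^2 ≤ 2*lam*(lam - ⟪A (x n), x n⟫) := by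
      intro n
      have hexp : ‖A (x n) - lam • x n‖^2
          = ‖A (x n)‖^2 - 2 * (lam * ⟪A (x n), x n⟫) + lam^2 := by
        rw [norm_sub_sq_real, real_inner_smul_right, norm_smul, hx1 n,
          Real.norm_eq_abs, abs_of_pos hlam]
        ring
      have hA2 : ‖A (x n)‖^2 ≤ lam^2 := by
        have := hbound _ (hxV n)
        rw [hx1 n, mul_one] at this
        exact pow_le_pow_left₀ (norm_nonneg _) this 2
      nlinarith [hx2 n]
    have hto0 : Filter.Tendsto (fun n => ‖A (x n) - lam • x n‖^2) Filter.atTop (nhds 0) := by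
      have h2 : Filter.Tendsto (fun n => 2*lam*(lam - ⟪A (x n), x n⟫)) Filter.atTop (nhds 0) := by
        have := (tendsto_const_nhds (x := lam) (f := Filter.atTop (α := ℕ))).sub htend
        have := this.const_mul (2*lam)
        simpa using this
      exact tendsto_of_tendsto_of_tendsto_of_le_of_le tendsto_const_nhds h2
        (fun n => sq_nonneg _) hsq
    have h := (Real.continuous_sqrt.tendsto 0).comp hto0
    rw [Real.sqrt_zero] at h
    exact h.congr fun n => Real.sqrt_sq (norm_nonneg _)
  -- compactness
  obtain ⟨K, hK, hKsub⟩ := IsCompactOperator.image_subset_compact_of_bounded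
    (f := (A : H →ₗ[ℝ] H)) hcomp (Metric.isBounded_closedBall (x := (0:H)) (r := 1))
  have hmem : ∀ n, A (x n) ∈ K := by
    intro n
    apply hKsub
    exact ⟨x n, by simp [Metric.mem_closedBall, hx1 n], rfl⟩
  obtain ⟨y, hyK, φ, hφ, hconv⟩ := hK.tendsto_subseq hmem
  have hconv' : Filter.Tendsto (fun n => lam • x (φ n)) Filter.atTop (nhds y) := by
    have h := hconv.sub (hdiff.comp hφ.tendsto_atTop)
    simpa using h
  set z := lam⁻¹ • y with hz
  have hxz : Filter.Tendsto (fun n => x (φ n)) Filter.atTop (nhds z) := by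
    have := hconv'.const_smul (lam⁻¹)
    simpa [smul_smul, inv_mul_cancel₀ hlam.ne'] using this
  have hzV : z ∈ V := hVc.mem_of_tendsto hxz (Filter.Eventually.of_forall (fun n => hxV (φ n)))
  have hz1 : ‖z‖ = 1 := by
    have h1 := (continuous_norm.tendsto z).comp hxz
    have h2 : Filter.Tendsto (fun n => ‖x (φ n)‖) Filter.atTop (nhds 1) := by
      simpa [hx1] using (tendsto_const_nhds : Filter.Tendsto (fun _ : ℕ => (1:ℝ)) Filter.atTop _)
    exact tendsto_nhds_unique (by simpa [Function.comp_def] using h1) h2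
  have hAz : A z = lam • z := by
    have h1 : Filter.Tendsto (fun n => A (x (φ n))) Filter.atTop (nhds (A z)) :=
      (A.continuous.tendsto z).comp hxz
    have h2 : Filter.Tendsto (fun n => A (x (φ n))) Filter.atTop (nhds y) := hconv
    have hy : y = A z := tendsto_nhds_unique h2 h1
    have hlz : lam • z = y := by rw [hz, smul_smul, mul_inv_cancel₀ hlam.ne', one_smul]
    rw [hlz]
    exact hy.symm
  exact ⟨z, hzV, by simp [← norm_pos_iff, hz1], hAz⟩

lemma keyL1 (A : H →L[ℝ] H) (hcomp : IsCompactOperator A)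
    (hsa : ∀ x y : H, ⟪A x, y⟫ = ⟪x, A y⟫)
    (V : Submodule ℝ H) (hVc : IsClosed (V : Set H)) (hVA : ∀ x ∈ V, A x ∈ V)
    {x₀ : H} (hx₀ : x₀ ∈ V) (hAx₀ : A x₀ ≠ 0) :
    ∃ (μ : ℝ) (x : H), x ∈ V ∧ x ≠ 0 ∧ A x = μ • x := by
  have hx₀ne : x₀ ≠ 0 := fun h => hAx₀ (by simp [h])
  set Sp : Set ℝ := (fun x => ⟪A x, x⟫) '' {x | x ∈ V ∧ ‖x‖ = 1} with hSp
  have hSpne : Sp.Nonempty := by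
    refine ⟨⟪A (‖x₀‖⁻¹ • x₀), ‖x₀‖⁻¹ • x₀⟫, ⟨‖x₀‖⁻¹ • x₀, ⟨V.smul_mem _ hx₀, ?_⟩, rfl⟩⟩
    rw [norm_smul, norm_inv, norm_norm, inv_mul_cancel₀ (norm_ne_zero_iff.mpr hx₀ne)]
  have hSpbdd : ∀ c ∈ Sp, |c| ≤ ‖A‖ := by
    rintro c ⟨x, ⟨hxV, hx1⟩, rfl⟩
    calc |⟪A x, x⟫| ≤ ‖A x‖ * ‖x‖ := abs_real_inner_le_norm _ _
    _ ≤ ‖A‖ * ‖x‖ * ‖x‖ := by gcongr; exact A.le_opNorm x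
    _ = ‖A‖ := by rw [hx1]; ring
  have hbddA : BddAbove Sp := ⟨‖A‖, fun c hc => (abs_le.mp (hSpbdd c hc)).2⟩
  have hbddA' : BddAbove (Neg.neg '' Sp) := by
    refine ⟨‖A‖, ?_⟩
    rintro c ⟨d, hd, rfl⟩
    exact neg_le.mp (abs_le.mp (hSpbdd d hd)).1
  set m₁ := sSup Sp with hm₁
  set m₂ := sSup (Neg.neg '' Sp) with hm₂
  set M := max m₁ m₂ with hM
  -- every unit vector in V: bounds
  have hq1 : ∀ x, x ∈ V → ‖x‖ = 1 → ⟪A x, x⟫ ≤ m₁ :=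
    fun x hxV hx1 => le_csSup hbddA ⟨x, ⟨hxV, hx1⟩, rfl⟩
  have hq2 : ∀ x, x ∈ V → ‖x‖ = 1 → -⟪A x, x⟫ ≤ m₂ :=
    fun x hxV hx1 => le_csSup hbddA' ⟨_, ⟨x, ⟨hxV, hx1⟩, rfl⟩, rfl⟩
  have hq : ∀ x ∈ V, |⟪A x, x⟫| ≤ M * ‖x‖^2 := by
    intro x hxV
    rcases eq_or_ne x 0 with rfl | hne
    · simp
    · have hnx : ‖x‖ ≠ 0 := norm_ne_zero_iff.mpr hne
      have hu1 : ‖(‖x‖⁻¹ • x)‖ = 1 := by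
        rw [norm_smul, norm_inv, norm_norm, inv_mul_cancel₀ hnx]
      have huV := V.smul_mem (‖x‖⁻¹ : ℝ) hxV
      have hkey : ⟪A (‖x‖⁻¹ • x), ‖x‖⁻¹ • x⟫ = ‖x‖⁻¹^2 * ⟪A x, x⟫ := by
        rw [map_smul, real_inner_smul_left, real_inner_smul_right]
        ring
      have h1 := hq1 _ huV hu1
      have h2 := hq2 _ huV hu1
      rw [hkey] at h1 h2
      have hMx : ‖x‖⁻¹ ^ 2 * ⟪A x, x⟫ ≤ M := h1.trans (le_max_left _ _)
      have hMx' : -(‖x‖⁻¹ ^ 2 * ⟪A x, x⟫) ≤ M := h2.trans (le_max_right _ _)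
      have hIeq : ⟪A x, x⟫ = ‖x‖^2 * (‖x‖⁻¹^2 * ⟪A x, x⟫) := by
        field_simp
      have h3 := mul_le_mul_of_nonneg_left hMx (sq_nonneg ‖x‖)
      have h4 := mul_le_mul_of_nonneg_left hMx' (sq_nonneg ‖x‖)
      rw [abs_le]
      constructor <;> nlinarith [h3, h4, hIeq]
  have hMpos : 0 < M := by
    by_contra h
    push_neg at h
    have hzero : ∀ x ∈ V, ⟪A x, x⟫ = 0 := by
      intro x hxV
      have := hq x hxV
      have h0 : M * ‖x‖^2 ≤ 0 := mul_nonpos_of_nonpos_of_nonneg h (sq_nonneg _)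
      have := abs_nonneg (⟪A x, x⟫ : ℝ)
      have habs := hq x hxV
      rw [abs_le] at habs
      nlinarith [habs.1, habs.2]
    have hAV0 : ∀ x ∈ V, ∀ y ∈ V, ⟪A x, y⟫ = 0 := by
      intro x hxV y hyV
      have h1 := hzero (x + y) (V.add_mem hxV hyV)
      have h2 := hzero x hxV
      have h3 := hzero y hyV
      have hsymm : ⟪A y, x⟫ = ⟪A x, y⟫ := by
        rw [hsa y x, real_inner_comm]
      rw [map_add, inner_add_left, inner_add_right, inner_add_right, hsymm] at h1
      linarith
    have := hAV0 x₀ hx₀ (A x₀) (hVA x₀ hx₀)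
    rw [real_inner_self_eq_norm_sq] at this
    exact hAx₀ (by simpa using norm_eq_zero.mp (by nlinarith [norm_nonneg (A x₀)]))
  -- operator norm bound on V
  have hbound : ∀ x ∈ V, ‖A x‖ ≤ M * ‖x‖ := by
    have hpol : ∀ x ∈ V, ∀ y ∈ V, ⟪A x, y⟫ ≤ M/2 * (‖x‖^2 + ‖y‖^2) := by
      intro x hxV y hyV
      have h1 := (abs_le.mp (hq (x+y) (V.add_mem hxV hyV))).2
      have h2 := (abs_le.mp (hq (x-y) (V.sub_mem hxV hyV))).1
      have hsymm : ⟪A y, x⟫ = ⟪A x, y⟫ := by rw [hsa y x, real_inner_comm]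
      have e1 : ⟪A (x+y), x+y⟫ = ⟪A x, x⟫ + 2*⟪A x, y⟫ + ⟪A y, y⟫ := by
        rw [map_add, inner_add_left, inner_add_right, inner_add_right, hsymm]; ring
      have e2 : ⟪A (x-y), x-y⟫ = ⟪A x, x⟫ - 2*⟪A x, y⟫ + ⟪A y, y⟫ := by
        rw [map_sub, inner_sub_left, inner_sub_right, inner_sub_right, hsymm]; ring
      have hn1 : ‖x+y‖^2 + ‖x-y‖^2 = 2*(‖x‖^2 + ‖y‖^2) := by
        rw [norm_add_sq_real, norm_sub_sq_real]; ring
      nlinarith [h1, h2]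
    intro x hxV
    rcases eq_or_ne (A x) 0 with h0 | h0
    · rw [h0, norm_zero]; positivity
    · have hAxV := hVA x hxV
      have hy : ((‖x‖ / ‖A x‖) • A x) ∈ V := V.smul_mem _ hAxV
      have := hpol x hxV _ hy
      rw [real_inner_smul_right, real_inner_self_eq_norm_sq, norm_smul] at this
      have hAx : (0:ℝ) < ‖A x‖ := norm_pos_iff.mpr h0
      rcases eq_or_ne x 0 with rfl | hxne
      · simp at h0
      · have hx : (0:ℝ) < ‖x‖ := norm_pos_iff.mpr hxne
        rw [Real.norm_eq_abs, abs_of_nonneg (by positivity)] at this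
        have key : ‖x‖ * ‖A x‖ ≤ M * ‖x‖^2 := by
          have hd : ‖x‖ / ‖A x‖ * ‖A x‖^2 = ‖x‖ * ‖A x‖ := by
            field_simp
          have hn : (‖x‖ / ‖A x‖ * ‖A x‖)^2 = ‖x‖^2 := by
            field_simp
          nlinarith [this]
        nlinarith [key, hx]
  -- sequence
  rcases le_total m₂ m₁ with hc | hc
  · have hMm : M = m₁ := max_eq_left hc
    have hseq : ∀ ε > 0, ∃ x ∈ V, ‖x‖ = 1 ∧ M - ε < ⟪A x, x⟫ := by
      intro ε hε
      obtain ⟨c, ⟨x, ⟨hxV, hx1⟩, rfl⟩, hcgt⟩ := exists_lt_of_lt_csSup hSpne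
        (by rw [← hm₁, ← hMm]; linarith : M - ε < sSup Sp)
      exact ⟨x, hxV, hx1, hcgt⟩
    obtain ⟨x, hxV, hxne, hAx⟩ := keyL0 A hcomp V hVc hMpos hbound hseq
    exact ⟨M, x, hxV, hxne, hAx⟩
  · have hMm : M = m₂ := max_eq_right hc
    have hseq : ∀ ε > 0, ∃ x ∈ V, ‖x‖ = 1 ∧ M - ε < ⟪(-A) x, x⟫ := by
      intro ε hε
      have hne' : (Neg.neg '' Sp).Nonempty := hSpne.image _
      obtain ⟨c, ⟨d, ⟨x, ⟨hxV, hx1⟩, rfl⟩, rfl⟩, hcgt⟩ := exists_lt_of_lt_csSup hne'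
        (by rw [← hm₂, ← hMm]; linarith : M - ε < sSup (Neg.neg '' Sp))
      refine ⟨x, hxV, hx1, ?_⟩
      simpa using hcgt
    have hcomp' : IsCompactOperator (⇑(-A)) := by
      have := hcomp.neg
      simpa using this
    have hbound' : ∀ x ∈ V, ‖(-A) x‖ ≤ M * ‖x‖ := by
      intro x hxV; simpa using hbound x hxV
    obtain ⟨x, hxV, hxne, hAx⟩ := keyL0 (-A) hcomp' V hVc hMpos hbound' hseq
    refine ⟨-M, x, hxV, hxne, ?_⟩
    have : -(A x) = M • x := by simpa using hAx
    rw [neg_smul, ← this, neg_neg]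

-- invariance of iSup of eigenspaces (subtype-indexed)
lemma inv_iSup (A : H →L[ℝ] H) {ι : Sort*} (c : ι → ℝ) :
    ∀ x ∈ ⨆ i : ι, Module.End.eigenspace (A : H →ₗ[ℝ] H) (c i),
      A x ∈ ⨆ i : ι, Module.End.eigenspace (A : H →ₗ[ℝ] H) (c i) := by
  intro x hx
  refine Submodule.iSup_induction (motive := fun y => A y ∈ _) _ hx ?_ ?_ ?_
  · intro i y hy
    have hy' : A y = c i • y := Module.End.mem_eigenspace_iff.mp hy
    rw [hy']
    exact Submodule.smul_mem _ _ (le_iSup (fun i => Module.End.eigenspace (A : H →ₗ[ℝ] H) (c i)) i hy)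
  · simp
  · intro y z hy hz
    rw [map_add]
    exact Submodule.add_mem _ hy hz

-- orthogonal of topological closure
lemma orth_closure (S : Submodule ℝ H) : S.topologicalClosureᗮ = Sᗮ := by
  rw [← S.orthogonal_orthogonal_eq_closure,
    (Sᗮ).orthogonal_orthogonal_eq_closure,
    S.isClosed_orthogonal.submodule_topologicalClosure_eq]

-- orthogonal-sum helper
lemma sum_norm_sq (A : H →L[ℝ] H) (hsa : ∀ x y : H, ⟪A x, y⟫ = ⟪x, A y⟫)
    {ι : Type*} (c : ι → ℝ) (hc : Function.Injective c) (s : Finset ι) (g : ι → H)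
    (hg : ∀ i, g i ∈ Module.End.eigenspace (A : H →ₗ[ℝ] H) (c i)) :
    ⟪∑ i ∈ s, g i, ∑ i ∈ s, g i⟫ = ∑ i ∈ s, ‖g i‖^2 := by
  have hsym : (A : H →ₗ[ℝ] H).IsSymmetric := fun x y => hsa x y
  have horth := hsym.orthogonalFamily_eigenspaces
  rw [sum_inner]
  refine Finset.sum_congr rfl ?_
  intro i hi
  rw [inner_sum]
  rw [Finset.sum_eq_single_of_mem i hi]
  · rw [real_inner_self_eq_norm_sq]
  · intro j hj hne
    exact horth (fun h => hne (hc h).symm) ⟨g i, hg i⟩ ⟨g j, hg j⟩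

lemma ineq_on_sup (A : H →L[ℝ] H) (hsa : ∀ x y : H, ⟪A x, y⟫ = ⟪x, A y⟫)
    {η rs : ℝ} (hrs : 0 < rs) :
    ∀ x ∈ ⨆ t : ((Set.Icc (η - rs) (η + rs))ᶜ : Set ℝ),
        Module.End.eigenspace (A : H →ₗ[ℝ] H) ↑t,
      rs * ‖x‖ ≤ ‖A x - η • x‖ := by
  intro x hx
  rw [Submodule.mem_iSup_iff_exists_finsupp] at hx
  obtain ⟨f, hf, hsum⟩ := hx
  have hxeq : x = ∑ i ∈ f.support, f i := by
    rw [← hsum]; rfl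
  have hc : Function.Injective (fun t : ((Set.Icc (η - rs) (η + rs))ᶜ : Set ℝ) => (t : ℝ)) :=
    Subtype.coe_injective
  have hg' : ∀ i : ((Set.Icc (η - rs) (η + rs))ᶜ : Set ℝ), ((i : ℝ) - η) • f i ∈ Module.End.eigenspace (A : H →ₗ[ℝ] H) (i : ℝ) :=
    fun i => Submodule.smul_mem _ _ (hf i)
  have hAx : A x - η • x = ∑ i ∈ f.support, ((i : ℝ) - η) • f i := by
    rw [hxeq, map_sum, Finset.smul_sum, ← Finset.sum_sub_distrib]
    refine Finset.sum_congr rfl fun i _ => ?_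
    have : A (f i) = (i : ℝ) • f i := Module.End.mem_eigenspace_iff.mp (hf i)
    rw [this, sub_smul]
  have hnx : ‖x‖^2 = ∑ i ∈ f.support, ‖f i‖^2 := by
    rw [← real_inner_self_eq_norm_sq, hxeq]
    exact sum_norm_sq A hsa _ hc f.support (fun i => f i) hf
  have hnAx : ‖A x - η • x‖^2 = ∑ i ∈ f.support, ((i : ℝ) - η)^2 * ‖f i‖^2 := by
    rw [← real_inner_self_eq_norm_sq, hAx,
      sum_norm_sq A hsa _ hc f.support _ hg']
    refine Finset.sum_congr rfl fun i _ => ?_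
    rw [norm_smul, mul_pow, Real.norm_eq_abs, sq_abs]
  have hterm : ∀ i ∈ f.support, rs^2 * ‖f i‖^2 ≤ ((i : ℝ) - η)^2 * ‖f i‖^2 := by
    intro i _
    have hi : (i : ℝ) ∉ Set.Icc (η - rs) (η + rs) := i.2
    rw [Set.mem_Icc, not_and_or] at hi
    have : rs^2 ≤ ((i : ℝ) - η)^2 := by
      rcases hi with hi | hi <;> push_neg at hi <;> nlinarith
    nlinarith [sq_nonneg (‖f i‖)]
  have hsq : (rs * ‖x‖)^2 ≤ ‖A x - η • x‖^2 := by
    rw [mul_pow, hnx, hnAx, Finset.mul_sum]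
    exact Finset.sum_le_sum hterm
  exact le_of_pow_le_pow_left₀ two_ne_zero (norm_nonneg _)
    (by simpa using hsq)

end auxiliary

/-- Spectral approximation lemma, second part: under the same hypotheses, for
any `r* > r` there is a unit vector `u*` in the closed span of the eigenvectors
of `A` corresponding to eigenvalues in `[η - r*, η + r*]` with `‖u - u*‖ ≤ 2r/r*`. -/
theorem nearby_eigenvector
    {H : Type*} [NormedAddCommGroup H] [InnerProductSpace ℝ H] [CompleteSpace H]
    [TopologicalSpace.SeparableSpace H]
    (A : H →L[ℝ] H)
    (hcomp : IsCompactOperator A)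
    (hsa : ∀ x y : H, ⟪A x, y⟫ = ⟪x, A y⟫)
    (hpos : ∀ x : H, 0 ≤ ⟪A x, x⟫)
    (u : H) (hu : ‖u‖ = 1)
    (η r : ℝ) (hη : 0 < η) (hr : 0 < r)
    (hAu : ‖A u - η • u‖ ≤ r)
    (rs : ℝ) (hrs : r < rs) :
    ∃ u' : H, ‖u'‖ = 1 ∧
      u' ∈ (⨆ t ∈ Set.Icc (η - rs) (η + rs),
              Module.End.eigenspace (A : H →ₗ[ℝ] H) t).topologicalClosure ∧
      ‖u - u'‖ ≤ 2 * r / rs := by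
  classical
  have hrspos : 0 < rs := hr.trans hrs
  have hsym : (A : H →ₗ[ℝ] H).IsSymmetric := fun x y => hsa x y
  set c : Set ℝ := Set.Icc (η - rs) (η + rs) with hc
  set S : Submodule ℝ H := ⨆ t ∈ c, Module.End.eigenspace (A : H →ₗ[ℝ] H) t with hS
  set S' : Submodule ℝ H :=
    ⨆ t : (cᶜ : Set ℝ), Module.End.eigenspace (A : H →ₗ[ℝ] H) ↑t with hS'
  set E := S.topologicalClosure with hE
  set W := S'.topologicalClosure with hW
  set G : Submodule ℝ H := ⨆ t : ℝ, Module.End.eigenspace (A : H →ₗ[ℝ] H) t with hG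
  set Gc := G.topologicalClosure with hGc
  have hSeq : S = ⨆ t : (c : Set ℝ),
      Module.End.eigenspace (A : H →ₗ[ℝ] H) ↑t := by
    rw [hS, iSup_subtype]
  -- invariance
  have hSinv : ∀ x ∈ S, A x ∈ S := by
    intro x hx
    rw [hSeq] at hx ⊢
    exact inv_iSup A _ x hx
  have hS'inv : ∀ x ∈ S', A x ∈ S' := fun x hx => inv_iSup A _ x hx
  have hGinv : ∀ x ∈ G, A x ∈ G := fun x hx => inv_iSup A _ x hx
  have closure_inv : ∀ (U : Submodule ℝ H), (∀ x ∈ U, A x ∈ U) →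
      ∀ x ∈ U.topologicalClosure, A x ∈ U.topologicalClosure := by
    intro U hU x hx
    have hx' : x ∈ closure (U : Set H) := hx
    exact map_mem_closure A.continuous hx' hU
  have hEinv : ∀ x ∈ E, A x ∈ E := closure_inv S hSinv
  have hGcinv : ∀ x ∈ Gc, A x ∈ Gc := closure_inv G hGinv
  have perp_inv : ∀ (U : Submodule ℝ H), (∀ x ∈ U, A x ∈ U) →
      ∀ x ∈ Uᗮ, A x ∈ Uᗮ := by
    intro U hU w hw
    rw [Submodule.mem_orthogonal] at hw ⊢
    intro v hv
    calc ⟪v, A w⟫ = ⟪A v, w⟫ := by rw [real_inner_comm, hsa w v, real_inner_comm]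
    _ = 0 := hw _ (hU v hv)
  -- Step B : Gcᗮ = ⊥
  have hGbot : Gcᗮ = ⊥ := by
    by_contra hne
    obtain ⟨x₀, hx₀mem, hx₀ne⟩ := Submodule.exists_mem_ne_zero_of_ne_bot hne
    have contra : ∀ y : H, y ∈ Gc → y ∈ Gcᗮ → y = 0 := by
      intro y h1 h2
      have : y ∈ Gc ⊓ Gcᗮ := ⟨h1, h2⟩
      rwa [Submodule.inf_orthogonal_eq_bot, Submodule.mem_bot] at this
    rcases eq_or_ne (A x₀) 0 with h0 | h0
    · have h1 : x₀ ∈ Module.End.eigenspace (A : H →ₗ[ℝ] H) 0 :=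
        Module.End.mem_eigenspace_iff.mpr (by simp [h0])
      have h2 : x₀ ∈ Gc :=
        G.le_topologicalClosure (le_iSup (fun t : ℝ => Module.End.eigenspace (A : H →ₗ[ℝ] H) t) 0 h1)
      exact hx₀ne (contra _ h2 hx₀mem)
    · obtain ⟨μ, x, hxV, hxne, hAx⟩ := keyL1 A hcomp hsa Gcᗮ Gc.isClosed_orthogonal
        (perp_inv Gc hGcinv) hx₀mem h0
      have h1 : x ∈ Module.End.eigenspace (A : H →ₗ[ℝ] H) μ :=
        Module.End.mem_eigenspace_iff.mpr hAx
      have h2 : x ∈ Gc :=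
        G.le_topologicalClosure (le_iSup (fun t : ℝ => Module.End.eigenspace (A : H →ₗ[ℝ] H) t) μ h1)
      exact hxne (contra _ h2 hxV)
  -- Step C : Eᗮ ≤ W
  have hS'E : S' ≤ Eᗮ := by
    have hOrtho : S' ⟂ S := by
      rw [Submodule.isOrtho_iSup_left]
      intro t
      rw [hSeq, Submodule.isOrtho_iSup_right]
      intro t'
      rw [Submodule.isOrtho_iff_inner_eq]
      intro x hx y hy
      have hts : (↑t : ℝ) ≠ (↑t' : ℝ) := by
        intro h
        exact t.2 (h ▸ t'.2)
      exact hsym.orthogonalFamily_eigenspaces hts ⟨x, hx⟩ ⟨y, hy⟩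
    have h := Submodule.isOrtho_iff_le.mp hOrtho
    rw [← orth_closure S] at h
    exact h
  have hWE : W ≤ Eᗮ :=
    S'.topologicalClosure_minimal hS'E (Submodule.isClosed_orthogonal E)
  have hEW : Eᗮ ≤ W := by
    intro w hw
    haveI : CompleteSpace W := S'.isClosed_topologicalClosure.completeSpace_coe
    set z := w - (Submodule.orthogonalProjection W w : H) with hzdef
    have hzW : z ∈ Wᗮ := W.sub_starProjection_mem_orthogonal w
    have hzE : z ∈ Eᗮ := Eᗮ.sub_mem hw (hWE (Submodule.orthogonalProjection W w).2)
    have hzS : z ∈ Sᗮ := by rwa [hE, orth_closure S] at hzE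
    have hzS' : z ∈ S'ᗮ := by rwa [hW, orth_closure S'] at hzW
    have hsub : G ≤ S ⊔ S' := by
      rw [hG]
      refine iSup_le fun t => ?_
      by_cases ht : t ∈ c
      · exact le_sup_of_le_left (le_biSup _ ht)
      · exact le_sup_of_le_right
          (le_iSup (fun s : (cᶜ : Set ℝ) =>
            Module.End.eigenspace (A : H →ₗ[ℝ] H) ↑s) ⟨t, ht⟩)
    have hzG : z ∈ Gᗮ := by
      have h1 : z ∈ (S ⊔ S')ᗮ := by
        rw [← Submodule.inf_orthogonal]; exact ⟨hzS, hzS'⟩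
      exact Submodule.orthogonal_le hsub h1
    have hGb : Gᗮ = ⊥ := by rwa [hGc, orth_closure G] at hGbot
    have hz0 : z = 0 := by
      rw [hGb, Submodule.mem_bot] at hzG
      exact hzG
    have : w = (Submodule.orthogonalProjection W w : H) := by rwa [sub_eq_zero] at hz0
    rw [this]
    exact (Submodule.orthogonalProjection W w).2
  -- inequality on W
  have hineqW : ∀ x ∈ W, rs * ‖x‖ ≤ ‖A x - η • x‖ := by
    have hcl : IsClosed {x : H | rs * ‖x‖ ≤ ‖A x - η • x‖} :=
      isClosed_le (continuous_const.mul continuous_norm)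
        ((A.continuous.sub (continuous_id.const_smul η)).norm)
    intro x hx
    have hsubset : (W : Set H) ⊆ {x : H | rs * ‖x‖ ≤ ‖A x - η • x‖} := by
      rw [hW, Submodule.topologicalClosure_coe]
      exact closure_minimal (fun y hy => ineq_on_sup A hsa hrspos y hy) hcl
    exact hsubset hx
  -- projections
  haveI : CompleteSpace E := S.isClosed_topologicalClosure.completeSpace_coe
  obtain ⟨v, hvE, w, hwE, huvw⟩ : ∃ v ∈ E, ∃ w ∈ Eᗮ, u = v + w :=
    ⟨(Submodule.orthogonalProjection E u : H), (Submodule.orthogonalProjection E u).2,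
      u - (Submodule.orthogonalProjection E u : H), E.sub_starProjection_mem_orthogonal u, by abel⟩
  have hAvE : A v - η • v ∈ E := E.sub_mem (hEinv v hvE) (E.smul_mem η hvE)
  have hAwE : A w - η • w ∈ Eᗮ := Eᗮ.sub_mem (perp_inv _ hEinv w hwE) (Eᗮ.smul_mem η hwE)
  have hdecomp : A u - η • u = (A v - η • v) + (A w - η • w) := by
    rw [huvw, map_add, smul_add]; abel
  have horthog : ⟪A v - η • v, A w - η • w⟫ = 0 :=
    (Submodule.mem_orthogonal E _).mp hAwE _ hAvE
  have hAwr : ‖A w - η • w‖ ≤ r := by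
    have hnorm2 : ‖A u - η • u‖^2 = ‖A v - η • v‖^2 + ‖A w - η • w‖^2 := by
      rw [hdecomp, norm_add_sq_real, horthog]; ring
    have h2 : ‖A w - η • w‖^2 ≤ r^2 := by
      have := pow_le_pow_left₀ (norm_nonneg _) hAu 2
      nlinarith [sq_nonneg (‖A v - η • v‖)]
    exact le_of_pow_le_pow_left₀ two_ne_zero hr.le h2
  have hwle : ‖w‖ ≤ r / rs := by
    have h1 := hineqW w (hEW hwE)
    rw [le_div_iff₀ hrspos, mul_comm]
    exact h1.trans hAwr
  have hworth : ⟪v, w⟫ = 0 := (Submodule.mem_orthogonal E w).mp hwE v hvE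
  have hpyth : ‖v‖^2 + ‖w‖^2 = 1 := by
    have : ‖u‖^2 = ‖v‖^2 + ‖w‖^2 := by
      rw [huvw, norm_add_sq_real, hworth]; ring
    rw [hu] at this; linarith
  have hwlt1 : ‖w‖ < 1 := hwle.trans_lt ((div_lt_one hrspos).mpr hrs)
  have hv2 : ‖v‖^2 = 1 - ‖w‖^2 := by linarith
  have hvpos : 0 < ‖v‖ := by
    have hne : ‖v‖ ≠ 0 := by
      intro h
      rw [h] at hv2
      nlinarith [norm_nonneg w]
    exact lt_of_le_of_ne (norm_nonneg v) (Ne.symm hne)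
  have hvle1 : ‖v‖ ≤ 1 := by nlinarith [sq_nonneg (‖w‖)]
  refine ⟨‖v‖⁻¹ • v, ?_, ?_, ?_⟩
  · rw [norm_smul, norm_inv, norm_norm, inv_mul_cancel₀ hvpos.ne']
  · exact E.smul_mem _ hvE
  · have hdiff : u - ‖v‖⁻¹ • v = w + (1 - ‖v‖⁻¹) • v := by
      rw [huvw, sub_smul, one_smul]; abel
    have hnv : ‖(1 - ‖v‖⁻¹) • v‖ = 1 - ‖v‖ := by
      rw [norm_smul, Real.norm_eq_abs]
      have hinv : 1 ≤ ‖v‖⁻¹ := by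
        have h1 := mul_inv_cancel₀ hvpos.ne'
        have h2 := inv_pos.mpr hvpos
        nlinarith
      rw [abs_of_nonpos (by linarith), neg_sub]
      field_simp
    have htri : ‖u - ‖v‖⁻¹ • v‖ ≤ ‖w‖ + (1 - ‖v‖) := by
      rw [hdiff, ← hnv]
      exact norm_add_le _ _
    have h1v : 1 - ‖v‖ ≤ ‖w‖^2 := by nlinarith
    have hw2 : ‖w‖^2 ≤ ‖w‖ := by nlinarith [norm_nonneg w]
    have : ‖u - ‖v‖⁻¹ • v‖ ≤ 2 * ‖w‖ := by linarith
    calc ‖u - ‖v‖⁻¹ • v‖ ≤ 2 * ‖w‖ := this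
    _ ≤ 2 * (r / rs) := by linarith
    _ = 2 * r / rs := by ring
end

section
/- Let u ∈ C²([0,L] × [0,ε₀]) and suppose ∂_t u(s, 0) = c·u(s,0) for all s, where c ∈ ℝ. Then there exists C > 0 such that for all ε ∈ (0, ε₀), |(1/ε)∫_0^L ∫_0^ε u(s,t)²(1 − tκ(s)) dt ds − ∫_0^L u(s,0)² ds| ≤ Cε, where κ : [0,L] → ℝ is continuous. -/
open MeasureTheory

/-- Boundary-layer averaging estimate: if `u ∈ C²([0,L]×[0,ε₀])` satisfies
`∂_t u(s,0) = c·u(s,0)` for all `s`, and `κ` is continuous on `[0,L]`, then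
there exists `C > 0` such that for all `ε ∈ (0,ε₀)`,
`|(1/ε)∫_0^L∫_0^ε u(s,t)²(1 − tκ(s)) dt ds − ∫_0^L u(s,0)² ds| ≤ Cε`. -/
theorem strip_average_estimate
    (L ε₀ c : ℝ) (hL : 0 < L) (hε₀ : 0 < ε₀)
    (u : ℝ × ℝ → ℝ)
    (hu : ContDiffOn ℝ 2 u (Set.Icc 0 L ×ˢ Set.Icc 0 ε₀))
    (hbc : ∀ s ∈ Set.Icc (0 : ℝ) L,
      derivWithin (fun t => u (s, t)) (Set.Icc 0 ε₀) 0 = c * u (s, 0))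
    (κ : ℝ → ℝ) (hκ : ContinuousOn κ (Set.Icc 0 L)) :
    ∃ C > (0 : ℝ), ∀ ε ∈ Set.Ioo (0 : ℝ) ε₀,
      |(1 / ε) * (∫ p in Set.Ioc 0 L ×ˢ Set.Ioc 0 ε,
            (u p) ^ 2 * (1 - p.2 * κ p.1)) -
          ∫ s in Set.Ioc (0 : ℝ) L, (u (s, 0)) ^ 2| ≤ C * ε := by
  classical
  set S : Set (ℝ × ℝ) := Set.Icc 0 L ×ˢ Set.Icc 0 ε₀ with hSdef
  have hScomp : IsCompact S := (isCompact_Icc).prod isCompact_Icc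
  have hSconv : Convex ℝ S := (convex_Icc _ _).prod (convex_Icc _ _)
  have hSuniq : UniqueDiffOn ℝ S :=
    (uniqueDiffOn_Icc hL).prod (uniqueDiffOn_Icc hε₀)
  have hucont : ContinuousOn u S := hu.continuousOn
  -- bound on u
  obtain ⟨B₀, hB₀⟩ := hScomp.exists_bound_of_continuousOn hucont
  set B := max B₀ 0 with hBdef
  have hB : ∀ p ∈ S, |u p| ≤ B := fun p hp => le_trans (hB₀ p hp) (le_max_left _ _)
  have hBnn : 0 ≤ B := le_max_right _ _
  -- bound on κ
  obtain ⟨K₀, hK₀⟩ := isCompact_Icc.exists_bound_of_continuousOn hκ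
  set K := max K₀ 0 with hKdef
  have hK : ∀ s ∈ Set.Icc (0:ℝ) L, |κ s| ≤ K := fun s hs => le_trans (hK₀ s hs) (le_max_left _ _)
  have hKnn : 0 ≤ K := le_max_right _ _
  -- Lipschitz bound on u via fderivWithin
  have hdiff : DifferentiableOn ℝ u S := hu.differentiableOn (by norm_num)
  have hfd : ContinuousOn (fderivWithin ℝ u S) S :=
    hu.continuousOn_fderivWithin hSuniq (by norm_num)
  obtain ⟨D₀, hD₀⟩ := hScomp.exists_bound_of_continuousOn hfd
  set D := max D₀ 0 with hDdef
  have hD : ∀ p ∈ S, ‖fderivWithin ℝ u S p‖ ≤ D := fun p hp => le_trans (hD₀ p hp) (le_max_left _ _)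
  have hDnn : 0 ≤ D := le_max_right _ _
  have hlip : ∀ s ∈ Set.Icc (0:ℝ) L, ∀ t ∈ Set.Icc (0:ℝ) ε₀,
      |u (s, t) - u (s, 0)| ≤ D * t := by
    intro s hs t ht
    have h1 : ((s, t) : ℝ × ℝ) ∈ S := ⟨hs, ht⟩
    have h2 : ((s, 0) : ℝ × ℝ) ∈ S := ⟨hs, Set.left_mem_Icc.2 hε₀.le⟩
    have := hSconv.norm_image_sub_le_of_norm_fderivWithin_le hdiff hD h2 h1
    have hnorm : ‖((s, t) : ℝ × ℝ) - (s, 0)‖ = t := by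
      have heq : ((s, t) : ℝ × ℝ) - (s, 0) = (0, t) := by simp
      rw [heq, Prod.norm_def]
      simp only [norm_zero, Real.norm_eq_abs]
      rw [abs_of_nonneg ht.1]
      exact max_eq_right ht.1
    rw [hnorm] at this
    simpa [Real.norm_eq_abs] using this
  set M : ℝ := 2 * B * D + K * B ^ 2 with hMdef
  have hMnn : 0 ≤ M := by positivity
  refine ⟨M * L + 1, by positivity, ?_⟩
  intro ε hε
  obtain ⟨hε0, hεε₀⟩ := hε
  set A := Set.Ioc (0:ℝ) L with hAdef
  set Bε := Set.Ioc (0:ℝ) ε with hBεdef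
  have hsub : A ×ˢ Bε ⊆ S := by
    rintro ⟨s, t⟩ ⟨hs, ht⟩
    exact ⟨⟨hs.1.le, hs.2⟩, ⟨ht.1.le, ht.2.trans hεε₀.le⟩⟩
  -- pointwise bound on the strip
  have hpoint : ∀ p ∈ A ×ˢ Bε,
      |u p ^ 2 * (1 - p.2 * κ p.1) - u (p.1, 0) ^ 2| ≤ M * ε := by
    rintro ⟨s, t⟩ hp
    obtain ⟨hs, ht⟩ := hp
    have hsI : s ∈ Set.Icc (0:ℝ) L := ⟨hs.1.le, hs.2⟩
    have htI : t ∈ Set.Icc (0:ℝ) ε₀ := ⟨ht.1.le, ht.2.trans hεε₀.le⟩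
    have hpS : ((s, t) : ℝ × ℝ) ∈ S := ⟨hsI, htI⟩
    have hp0 : ((s, 0) : ℝ × ℝ) ∈ S := ⟨hsI, Set.left_mem_Icc.2 hε₀.le⟩
    have key : u (s, t) ^ 2 * (1 - t * κ s) - u (s, 0) ^ 2
        = (u (s, t) ^ 2 - u (s, 0) ^ 2) - t * κ s * u (s, t) ^ 2 := by ring
    have h1 : |u (s, t) ^ 2 - u (s, 0) ^ 2| ≤ 2 * B * D * t := by
      have : u (s, t) ^ 2 - u (s, 0) ^ 2
          = (u (s, t) + u (s, 0)) * (u (s, t) - u (s, 0)) := by ring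
      rw [this, abs_mul]
      calc |u (s, t) + u (s, 0)| * |u (s, t) - u (s, 0)|
          ≤ (B + B) * (D * t) := by
            apply mul_le_mul _ (hlip s hsI t htI) (abs_nonneg _) (by positivity)
            exact (abs_add_le _ _).trans (add_le_add (hB _ hpS) (hB _ hp0))
        _ = 2 * B * D * t := by ring
    have h2 : |t * κ s * u (s, t) ^ 2| ≤ K * B ^ 2 * t := by
      rw [abs_mul, abs_mul]
      have habs_u : |u (s, t) ^ 2| ≤ B ^ 2 := by
        rw [abs_pow]
        exact pow_le_pow_left₀ (abs_nonneg _) (hB _ hpS) 2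
      have : |t| * |κ s| * |u (s, t) ^ 2| ≤ t * K * B ^ 2 := by
        rw [abs_of_nonneg ht.1.le]
        apply mul_le_mul _ habs_u (abs_nonneg _) (mul_nonneg ht.1.le hKnn)
        exact mul_le_mul_of_nonneg_left (hK s hsI) ht.1.le
      linarith
    have htε : t ≤ ε := ht.2
    calc |u (s, t) ^ 2 * (1 - t * κ s) - u (s, 0) ^ 2|
        ≤ |u (s, t) ^ 2 - u (s, 0) ^ 2| + |t * κ s * u (s, t) ^ 2| := by
          rw [key]; exact abs_sub _ _
      _ ≤ 2 * B * D * t + K * B ^ 2 * t := add_le_add h1 h2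
      _ = M * t := by ring
      _ ≤ M * ε := mul_le_mul_of_nonneg_left htε hMnn
  -- integrability
  have hfcont : ContinuousOn (fun p : ℝ × ℝ => u p ^ 2 * (1 - p.2 * κ p.1)) S := by
    apply ContinuousOn.mul
    · exact hucont.pow 2
    · apply ContinuousOn.sub continuousOn_const
      exact (continuousOn_snd).mul
        (hκ.comp continuousOn_fst (fun p hp => hp.1))
  have hgcont : ContinuousOn (fun p : ℝ × ℝ => u (p.1, 0) ^ 2) S := by
    apply ContinuousOn.pow
    exact hucont.comp (continuousOn_fst.prodMk continuousOn_const)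
      (fun p hp => ⟨hp.1, Set.left_mem_Icc.2 hε₀.le⟩)
  have hmeas : MeasurableSet (A ×ˢ Bε) := measurableSet_Ioc.prod measurableSet_Ioc
  have hf_int : IntegrableOn (fun p : ℝ × ℝ => u p ^ 2 * (1 - p.2 * κ p.1)) (A ×ˢ Bε) :=
    (hfcont.integrableOn_compact hScomp).mono_set hsub
  have hg_int : IntegrableOn (fun p : ℝ × ℝ => u (p.1, 0) ^ 2) (A ×ˢ Bε) :=
    (hgcont.integrableOn_compact hScomp).mono_set hsub
  -- Fubini for the second term
  have hεJ : (∫ p in A ×ˢ Bε, u (p.1, 0) ^ 2)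
      = ε * ∫ s in A, u (s, 0) ^ 2 := by
    rw [Measure.volume_eq_prod] at hg_int ⊢
    rw [setIntegral_prod _ hg_int]
    have hv : (volume Bε).toReal = ε := by
      simp [hBεdef, Real.volume_Ioc, hε0.le]
    simp only [setIntegral_const, smul_eq_mul, measureReal_def, hv]
    exact integral_const_mul ε _
  -- main estimate
  have hdiffint : |(∫ p in A ×ˢ Bε, u p ^ 2 * (1 - p.2 * κ p.1))
      - ε * ∫ s in A, u (s, 0) ^ 2| ≤ (M * ε) * (L * ε) := by
    rw [← hεJ, ← integral_sub hf_int hg_int]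
    have hvol : (volume (A ×ˢ Bε)).toReal = L * ε := by
      rw [Measure.volume_eq_prod, Measure.prod_prod, Real.volume_Ioc, Real.volume_Ioc,
        sub_zero, sub_zero, ← ENNReal.ofReal_mul hL.le,
        ENNReal.toReal_ofReal (by positivity)]
    have hfin : volume (A ×ˢ Bε) < ⊤ :=
      lt_of_le_of_lt (measure_mono hsub) hScomp.measure_lt_top
    have := norm_setIntegral_le_of_norm_le_const
      (C := M * ε) (s := A ×ˢ Bε)
      (f := fun p : ℝ × ℝ => u p ^ 2 * (1 - p.2 * κ p.1) - u (p.1, 0) ^ 2) hfin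
      (fun p hp => by simpa [Real.norm_eq_abs] using hpoint p hp)
    rw [measureReal_def, hvol] at this
    simpa [Real.norm_eq_abs] using this
  have hεne : ε ≠ 0 := ne_of_gt hε0
  calc |(1 / ε) * (∫ p in A ×ˢ Bε, u p ^ 2 * (1 - p.2 * κ p.1))
        - ∫ s in A, u (s, 0) ^ 2|
      = (1 / ε) * |(∫ p in A ×ˢ Bε, u p ^ 2 * (1 - p.2 * κ p.1))
        - ε * ∫ s in A, u (s, 0) ^ 2| := by
        have heq : (1 / ε) * (∫ p in A ×ˢ Bε, u p ^ 2 * (1 - p.2 * κ p.1))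
            - ∫ s in A, u (s, 0) ^ 2
            = (1 / ε) * ((∫ p in A ×ˢ Bε, u p ^ 2 * (1 - p.2 * κ p.1))
              - ε * ∫ s in A, u (s, 0) ^ 2) := by field_simp
        rw [heq, abs_mul, abs_of_pos (by positivity : (0:ℝ) < 1 / ε)]
    _ ≤ (1 / ε) * ((M * ε) * (L * ε)) := by
        apply mul_le_mul_of_nonneg_left hdiffint (by positivity)
    _ = (M * L) * ε := by field_simp
    _ ≤ (M * L + 1) * ε := by nlinarith
end
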